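/- Let U ⊆ ℝⁿ be open and let f, g, g^μ, g^{μ₁μ₂}, …, g^{μ₁…μ_r} : U → ℝ be smooth functions, where each g^{μ₁…μₖ} (2 ≤ k ≤ r) is symmetric in its indices. Then, with summation over all repeated greek indices, Σ_{k=0}^{r} ∂_{μ₁}⋯∂_{μₖ}(f g^{μ₁…μₖ}) = Σ_{k=0}^{r} Σ_{l=0}^{r−k} binom(k+l, k) · (∂_{μ₁}⋯∂_{μₖ} f)(∂_{ν₁}⋯∂_{ν_l} g^{μ₁…μₖ ν₁…ν_l}). -/

import Mathlib

open scoped BigOperators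

noncomputable section

/-- Partial derivative of a function on `ℝⁿ` in the coordinate direction `μ`. -/
def pd {n : ℕ} (μ : Fin n) (f : (Fin n → ℝ) → ℝ) : (Fin n → ℝ) → ℝ :=
  fun x => fderiv ℝ f x (Pi.single μ 1)

/-- Iterated partial derivatives `∂_{μ₁}⋯∂_{μₖ}` along a list of coordinate directions. -/
def pds {n : ℕ} : List (Fin n) → ((Fin n → ℝ) → ℝ) → (Fin n → ℝ) → ℝ
  | [], f => f
  | μ :: l, f => pd μ (pds l f)

namespace HPF

set_option linter.unusedSectionVars false

variable {n : ℕ} {U : Set (Fin n → ℝ)} (hU : IsOpen U)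
include hU

lemma contDiffOn_pd {F : (Fin n → ℝ) → ℝ} (hF : ContDiffOn ℝ (⊤ : ℕ∞) F U)
    (μ : Fin n) : ContDiffOn ℝ (⊤ : ℕ∞) (pd μ F) U := by
  have h1 : ContDiffOn ℝ (⊤ : ℕ∞) (fun x => fderiv ℝ F x) U :=
    hF.fderiv_of_isOpen hU (by simp)
  exact h1.clm_apply contDiffOn_const

lemma contDiffOn_pds {F : (Fin n → ℝ) → ℝ} (hF : ContDiffOn ℝ (⊤ : ℕ∞) F U)
    (L : List (Fin n)) : ContDiffOn ℝ (⊤ : ℕ∞) (pds L F) U := by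
  induction L with
  | nil => exact hF
  | cons μ L ih => exact contDiffOn_pd hU ih μ

lemma diffAt_of_contDiffOn {F : (Fin n → ℝ) → ℝ} (hF : ContDiffOn ℝ (⊤ : ℕ∞) F U)
    {x : Fin n → ℝ} (hx : x ∈ U) : DifferentiableAt ℝ F x :=
  ((hF.contDiffAt (hU.mem_nhds hx)).differentiableAt (by simp))

lemma pd_congr {F G : (Fin n → ℝ) → ℝ} (h : ∀ y ∈ U, F y = G y) {x : Fin n → ℝ}
    (hx : x ∈ U) (μ : Fin n) : pd μ F x = pd μ G x := by
  have : F =ᶠ[nhds x] G := Filter.eventuallyEq_of_mem (hU.mem_nhds hx) h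
  simp only [pd, this.fderiv_eq]

lemma pds_congr {F G : (Fin n → ℝ) → ℝ} (h : ∀ y ∈ U, F y = G y) (L : List (Fin n)) :
    ∀ x ∈ U, pds L F x = pds L G x := by
  induction L with
  | nil => exact h
  | cons μ L ih => exact fun x hx => pd_congr hU ih hx μ

omit hU

lemma pd_sum {ι : Type*} (s : Finset ι) (F : ι → (Fin n → ℝ) → ℝ) {x : Fin n → ℝ}
    (h : ∀ i ∈ s, DifferentiableAt ℝ (F i) x) (μ : Fin n) :
    pd μ (fun y => ∑ i ∈ s, F i y) x = ∑ i ∈ s, pd μ (F i) x := by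
  simp only [pd]
  rw [fderiv_fun_sum h]
  simp

lemma pd_const_mul (c : ℝ) (F : (Fin n → ℝ) → ℝ) {x : Fin n → ℝ}
    (h : DifferentiableAt ℝ F x) (μ : Fin n) :
    pd μ (fun y => c * F y) x = c * pd μ F x := by
  simp only [pd, fderiv_const_mul h c]; simp

lemma pd_mul {F G : (Fin n → ℝ) → ℝ} {x : Fin n → ℝ}
    (hF : DifferentiableAt ℝ F x) (hG : DifferentiableAt ℝ G x) (μ : Fin n) :
    pd μ (fun y => F y * G y) x = pd μ F x * G x + F x * pd μ G x := by
  simp only [pd, fderiv_fun_mul hF hG]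
  simp [mul_comm]
  ring

theorem ofFn_insertNth' {α : Type*} {m : ℕ} (j : Fin (m+1)) (x : α) (ν : Fin m → α) :
    List.ofFn (Fin.insertNth j x ν) =
      ((List.ofFn ν).take j) ++ x :: ((List.ofFn ν).drop j) := by
  have hj : (j:ℕ) ≤ m := Fin.is_le j
  apply List.ext_getElem
  · simp; omega
  · intro i h1 h2
    simp only [List.length_ofFn] at h1
    simp only [List.getElem_ofFn]
    rcases lt_trichotomy i (j : ℕ) with h | h | h
    · rw [List.getElem_append_left (by simp; omega)]
      rw [List.getElem_take, List.getElem_ofFn]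
      have e1 : (⟨i, by omega⟩ : Fin (m+1)) = j.succAbove ⟨i, by omega⟩ := by
        rw [Fin.succAbove_of_castSucc_lt]
        · rfl
        · simp [Fin.lt_def, h]
      rw [e1, Fin.insertNth_apply_succAbove]
    · rw [List.getElem_append_right (by simp; omega)]
      rw [List.getElem_cons, dif_pos (by simp; omega)]
      have e1 : (⟨i, by omega⟩ : Fin (m+1)) = j := Fin.ext h
      rw [e1, Fin.insertNth_apply_same]
    · rw [List.getElem_append_right (by simp; omega)]
      rw [List.getElem_cons, dif_neg (by simp; omega)]
      simp only [List.getElem_drop, List.getElem_ofFn]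
      have e1 : (⟨i, by omega⟩ : Fin (m+1)) = j.succAbove ⟨i - 1, by omega⟩ := by
        rw [Fin.succAbove_of_le_castSucc]
        · simp [Fin.ext_iff]; omega
        · simp [Fin.le_def]; omega
      rw [e1, Fin.insertNth_apply_succAbove]
      congr 1
      simp [Fin.ext_iff]
      omega

lemma take_ofFn_insertNth {α : Type*} {m : ℕ} (j : Fin (m+1)) (x : α) (ν : Fin m → α) :
    (List.ofFn (Fin.insertNth j x ν)).take j = (List.ofFn ν).take j := by
  rw [ofFn_insertNth']
  rw [List.take_append_of_le_length (by simp [Fin.is_le j]), List.take_take]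
  simp

lemma drop_ofFn_insertNth {α : Type*} {m : ℕ} (j : Fin (m+1)) (x : α) (ν : Fin m → α) :
    (List.ofFn (Fin.insertNth j x ν)).drop j = x :: (List.ofFn ν).drop j := by
  rw [ofFn_insertNth']
  rw [List.drop_append_of_le_length (by simp [Fin.is_le j])]
  have : ((List.ofFn ν).take (j:ℕ)).drop (j:ℕ) = [] := by
    apply List.drop_eq_nil_of_le; simp
  rw [this]
  simp

/-- the permutation sending `0 ↦ j` and `i.succ ↦ j.succAbove i` -/
lemma insertNth_comp_perm {α : Type*} {m : ℕ} (j : Fin (m+1)) (x : α) (ν : Fin m → α) :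
    ∃ σ : Equiv.Perm (Fin (m+1)), (Fin.insertNth j x ν) ∘ σ = Fin.cons x ν := by
  refine ⟨(finSuccEquiv' 0).trans (finSuccEquiv' j).symm, ?_⟩
  funext i
  induction i using Fin.cases with
  | zero =>
    simp only [Function.comp_apply, Equiv.trans_apply, finSuccEquiv'_at,
      finSuccEquiv'_symm_none, Fin.cons_zero, Fin.insertNth_apply_same]
  | succ k =>
    have h0 : finSuccEquiv' (0 : Fin (m+1)) k.succ = some k := by
      rw [show (k.succ : Fin (m+1)) = Fin.succAbove 0 k by simp [Fin.succAbove]]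
      exact finSuccEquiv'_succAbove 0 k
    simp only [Function.comp_apply, Equiv.trans_apply, h0,
      finSuccEquiv'_symm_some, Fin.insertNth_apply_succAbove, Fin.cons_succ]

lemma cons_comp_perm {α : Type*} {m : ℕ} (x : α) (ν : Fin m → α) (σ : Equiv.Perm (Fin m)) :
    ∃ σ' : Equiv.Perm (Fin (m+1)), (Fin.cons x ν) ∘ σ' = Fin.cons x (ν ∘ σ) := by
  refine ⟨((finSuccEquiv m).trans (Equiv.optionCongr σ)).trans (finSuccEquiv m).symm, ?_⟩
  funext i
  induction i using Fin.cases with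
  | zero => simp
  | succ k => simp

/-- Pascal-style recombination. -/
lemma pascal_sum (m : ℕ) (B : ℕ → ℝ) :
    ∑ j ∈ Finset.range (m+1), (m.choose j : ℝ) * (B (j+1) + B j)
      = ∑ j ∈ Finset.range (m+2), ((m+1).choose j : ℝ) * B j := by
  have h1 : ∑ j ∈ Finset.range (m+2), ((m+1).choose j : ℝ) * B j
      = (∑ j ∈ Finset.range (m+1), ((m+1).choose (j+1) : ℝ) * B (j+1)) + B 0 := by
    rw [Finset.sum_range_succ']; simp
  have h2 : ∀ j, ((m+1).choose (j+1) : ℝ) = (m.choose j : ℝ) + (m.choose (j+1) : ℝ) := by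
    intro j; rw [Nat.choose_succ_succ]; push_cast; ring
  have h3 : (∑ j ∈ Finset.range (m+1), (m.choose (j+1) : ℝ) * B (j+1)) + B 0
      = ∑ j ∈ Finset.range (m+1), (m.choose j : ℝ) * B j := by
    have := Finset.sum_range_succ' (fun j => (m.choose j : ℝ) * B j) (m+1)
    rw [Finset.sum_range_succ (fun j => (m.choose j : ℝ) * B j) (m+1)] at this
    simp only [Nat.choose_succ_self, Nat.cast_zero, zero_mul, add_zero,
      Nat.choose_zero_right, Nat.cast_one, one_mul] at this
    linarith [this]
  calc ∑ j ∈ Finset.range (m+1), (m.choose j : ℝ) * (B (j+1) + B j)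
      = (∑ j ∈ Finset.range (m+1), (m.choose j : ℝ) * B (j+1))
        + ∑ j ∈ Finset.range (m+1), (m.choose j : ℝ) * B j := by
        rw [← Finset.sum_add_distrib]; congr 1; funext j; ring
    _ = (∑ j ∈ Finset.range (m+1), (m.choose j : ℝ) * B (j+1))
        + ((∑ j ∈ Finset.range (m+1), (m.choose (j+1) : ℝ) * B (j+1)) + B 0) := by rw [h3]
    _ = (∑ j ∈ Finset.range (m+1), ((m+1).choose (j+1) : ℝ) * B (j+1)) + B 0 := by
        rw [← add_assoc, ← Finset.sum_add_distrib]
        congr 1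
        apply Finset.sum_congr rfl
        intro j _
        rw [h2]; ring
    _ = _ := h1.symm

/-- Triangle reindexing. -/
lemma tri_sum (r : ℕ) (T : ℕ → ℕ → ℝ) :
    ∑ m ∈ Finset.range (r+1), ∑ j ∈ Finset.range (m+1), T m j
      = ∑ k ∈ Finset.range (r+1), ∑ l ∈ Finset.range (r-k+1), T (k+l) k := by
  induction r with
  | zero => simp
  | succ r ih =>
    rw [Finset.sum_range_succ, ih,
      Finset.sum_range_succ (fun k => ∑ l ∈ Finset.range (r+1-k+1), T (k+l) k)]
    have h1 : ∀ k ∈ Finset.range (r+1),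
        ∑ l ∈ Finset.range (r+1-k+1), T (k+l) k
          = (∑ l ∈ Finset.range (r-k+1), T (k+l) k) + T (r+1) k := by
      intro k hk
      have hkr : k ≤ r := by simpa [Nat.lt_succ_iff] using hk
      have : r+1-k+1 = (r-k+1)+1 := by omega
      rw [this, Finset.sum_range_succ]
      congr 2
      omega
    rw [Finset.sum_congr rfl h1, Finset.sum_add_distrib]
    have h2 : r + 1 - (r+1) + 1 = 1 := by omega
    rw [h2]
    rw [Finset.sum_range_succ (fun j => T (r+1) j) (r+1)]
    simp
    ring

include hU

/-- Key inductive lemma: higher Leibniz rule, symmetrized and summed. -/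
lemma key {F : (Fin n → ℝ) → ℝ} (hF : ContDiffOn ℝ (⊤ : ℕ∞) F U) :
    ∀ (m : ℕ) (G : (Fin m → Fin n) → (Fin n → ℝ) → ℝ),
      (∀ μ, ContDiffOn ℝ (⊤ : ℕ∞) (G μ) U) →
      (∀ (σ : Equiv.Perm (Fin m)) (μ : Fin m → Fin n), G (μ ∘ σ) = G μ) →
      ∀ x ∈ U,
        ∑ μ : Fin m → Fin n, pds (List.ofFn μ) (fun y => F y * G μ y) x
          = ∑ j ∈ Finset.range (m+1), ((m.choose j : ℝ)) *
              ∑ μ : Fin m → Fin n, pds ((List.ofFn μ).take j) F x *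
                pds ((List.ofFn μ).drop j) (G μ) x := by
  intro m
  induction m with
  | zero =>
    intro G hG hGs x hx
    simp [pds]
  | succ m ih =>
    intro G hG hGs x hx
    classical
    set B : ℕ → ℝ := fun j => ∑ μ : Fin (m+1) → Fin n,
        pds ((List.ofFn μ).take j) F x * pds ((List.ofFn μ).drop j) (G μ) x with hBdef
    let e : (Fin n × (Fin m → Fin n)) ≃ (Fin (m+1) → Fin n) :=
      Fin.consEquiv (fun _ : Fin (m+1) => Fin n)
    have he : ∀ (μ0 : Fin n) (ν : Fin m → Fin n), e (μ0, ν) = Fin.cons μ0 ν := fun _ _ => rfl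
    have hofn : ∀ (μ0 : Fin n) (ν : Fin m → Fin n),
        List.ofFn (Fin.cons μ0 ν : Fin (m+1) → Fin n) = μ0 :: List.ofFn ν := by
      intro μ0 ν
      rw [List.ofFn_succ]
      simp only [Fin.cons_zero, Fin.cons_succ]
    -- differentiability helpers
    have dF : ∀ (L : List (Fin n)), DifferentiableAt ℝ (pds L F) x :=
      fun L => diffAt_of_contDiffOn hU (contDiffOn_pds hU hF L) hx
    have dG : ∀ (μ : Fin (m+1) → Fin n) (L : List (Fin n)),
        DifferentiableAt ℝ (pds L (G μ)) x :=
      fun μ L => diffAt_of_contDiffOn hU (contDiffOn_pds hU (hG μ) L) hx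
    have hGs' : ∀ (μ0 : Fin n) (σ : Equiv.Perm (Fin m)) (ν : Fin m → Fin n),
        G (Fin.cons μ0 (ν ∘ σ)) = G (Fin.cons μ0 ν) := by
      intro μ0 σ ν
      obtain ⟨σ', hσ'⟩ := cons_comp_perm μ0 ν σ
      rw [← hσ']
      exact hGs σ' _
    have step1 : ∀ μ0 : Fin n,
        ∑ ν : Fin m → Fin n,
            pd μ0 (pds (List.ofFn ν) (fun y => F y * G (Fin.cons μ0 ν) y)) x
          = ∑ j ∈ Finset.range (m+1), (m.choose j : ℝ) *
              ∑ ν : Fin m → Fin n,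
                (pd μ0 (pds ((List.ofFn ν).take j) F) x
                    * pds ((List.ofFn ν).drop j) (G (Fin.cons μ0 ν)) x
                  + pds ((List.ofFn ν).take j) F x
                    * pd μ0 (pds ((List.ofFn ν).drop j) (G (Fin.cons μ0 ν))) x) := by
      intro μ0
      have h1 : ∑ ν : Fin m → Fin n,
            pd μ0 (pds (List.ofFn ν) (fun y => F y * G (Fin.cons μ0 ν) y)) x
          = pd μ0 (fun y => ∑ ν : Fin m → Fin n,
              pds (List.ofFn ν) (fun y' => F y' * G (Fin.cons μ0 ν) y') y) x := by
        rw [pd_sum _ _ (fun ν _ =>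
          diffAt_of_contDiffOn hU (contDiffOn_pds hU (hF.mul (hG _)) _) hx) μ0]
      rw [h1]
      have h2 : pd μ0 (fun y => ∑ ν : Fin m → Fin n,
              pds (List.ofFn ν) (fun y' => F y' * G (Fin.cons μ0 ν) y') y) x
          = pd μ0 (fun y => ∑ j ∈ Finset.range (m+1), (m.choose j : ℝ) *
              ∑ ν : Fin m → Fin n,
                pds ((List.ofFn ν).take j) F y
                  * pds ((List.ofFn ν).drop j) (G (Fin.cons μ0 ν)) y) x := by
        apply pd_congr hU ?_ hx
        intro y hy
        exact ih (fun ν => G (Fin.cons μ0 ν)) (fun ν => hG _) (hGs' μ0) y hy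
      rw [h2]
      have dterm : ∀ (j : ℕ) (ν : Fin m → Fin n), DifferentiableAt ℝ
          (fun y => pds ((List.ofFn ν).take j) F y
            * pds ((List.ofFn ν).drop j) (G (Fin.cons μ0 ν)) y) x :=
        fun j ν => (dF _).mul
          (diffAt_of_contDiffOn hU (contDiffOn_pds hU (hG _) _) hx)
      rw [pd_sum _ _ (fun j _ => DifferentiableAt.const_mul
        (DifferentiableAt.fun_sum (fun ν _ => dterm j ν)) _) μ0]
      apply Finset.sum_congr rfl
      intro j _
      rw [pd_const_mul _ _ (DifferentiableAt.fun_sum (fun ν _ => dterm j ν)) μ0]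
      congr 1
      rw [pd_sum _ _ (fun ν _ => dterm j ν) μ0]
      apply Finset.sum_congr rfl
      intro ν _
      rw [pd_mul (dF _) (diffAt_of_contDiffOn hU (contDiffOn_pds hU (hG _) _) hx) μ0]
    have hT1 : ∀ j : ℕ,
        (∑ μ0 : Fin n, ∑ ν : Fin m → Fin n,
          pd μ0 (pds ((List.ofFn ν).take j) F) x
            * pds ((List.ofFn ν).drop j) (G (Fin.cons μ0 ν)) x) = B (j+1) := by
      intro j
      simp only [hBdef]
      rw [← Equiv.sum_comp e (fun μ => pds ((List.ofFn μ).take (j+1)) F x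
        * pds ((List.ofFn μ).drop (j+1)) (G μ) x), Fintype.sum_prod_type]
      apply Finset.sum_congr rfl; intro μ0 _
      apply Finset.sum_congr rfl; intro ν _
      rw [he μ0 ν, hofn]
      rw [List.take_succ_cons, List.drop_succ_cons]
      rfl
    have hT2 : ∀ j, j < m + 1 →
        (∑ μ0 : Fin n, ∑ ν : Fin m → Fin n,
          pds ((List.ofFn ν).take j) F x
            * pd μ0 (pds ((List.ofFn ν).drop j) (G (Fin.cons μ0 ν))) x) = B j := by
      intro j hj
      set J : Fin (m+1) := ⟨j, hj⟩ with hJ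
      let e' : (Fin n × (Fin m → Fin n)) ≃ (Fin (m+1) → Fin n) :=
        Fin.insertNthEquiv (fun _ : Fin (m+1) => Fin n) J
      have he' : ∀ (μ0 : Fin n) (ν : Fin m → Fin n), e' (μ0, ν) = J.insertNth μ0 ν := fun _ _ => rfl
      simp only [hBdef]
      rw [← Equiv.sum_comp e' (fun μ => pds ((List.ofFn μ).take j) F x
        * pds ((List.ofFn μ).drop j) (G μ) x), Fintype.sum_prod_type]
      apply Finset.sum_congr rfl; intro μ0 _
      apply Finset.sum_congr rfl; intro ν _
      rw [he' μ0 ν]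
      have hcoe : ((J : Fin (m+1)) : ℕ) = j := rfl
      have htk : (List.ofFn (J.insertNth μ0 ν)).take j = (List.ofFn ν).take j := by
        rw [← hcoe, take_ofFn_insertNth]
      have hdr : (List.ofFn (J.insertNth μ0 ν)).drop j = μ0 :: (List.ofFn ν).drop j := by
        rw [← hcoe, drop_ofFn_insertNth]
      have hGeq : G (J.insertNth μ0 ν) = G (Fin.cons μ0 ν) := by
        obtain ⟨σ, hσ⟩ := insertNth_comp_perm J μ0 ν
        rw [← hσ]
        exact (hGs σ _).symm
      rw [htk, hdr, hGeq]
      rfl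
    calc ∑ μ : Fin (m+1) → Fin n, pds (List.ofFn μ) (fun y => F y * G μ y) x
        = ∑ μ0 : Fin n, ∑ ν : Fin m → Fin n,
            pd μ0 (pds (List.ofFn ν) (fun y => F y * G (Fin.cons μ0 ν) y)) x := by
          rw [← Equiv.sum_comp e (fun μ => pds (List.ofFn μ) (fun y => F y * G μ y) x),
            Fintype.sum_prod_type]
          apply Finset.sum_congr rfl; intro μ0 _
          apply Finset.sum_congr rfl; intro ν _
          rw [he μ0 ν, hofn]
          rfl
      _ = ∑ μ0 : Fin n, ∑ j ∈ Finset.range (m+1), (m.choose j : ℝ) *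
            ∑ ν : Fin m → Fin n,
              (pd μ0 (pds ((List.ofFn ν).take j) F) x
                  * pds ((List.ofFn ν).drop j) (G (Fin.cons μ0 ν)) x
                + pds ((List.ofFn ν).take j) F x
                  * pd μ0 (pds ((List.ofFn ν).drop j) (G (Fin.cons μ0 ν))) x) := by
          exact Finset.sum_congr rfl (fun μ0 _ => step1 μ0)
      _ = ∑ j ∈ Finset.range (m+1), (m.choose j : ℝ) * (B (j+1) + B j) := by
          rw [Finset.sum_comm]
          apply Finset.sum_congr rfl; intro j hj
          rw [← Finset.mul_sum]
          congr 1
          rw [← hT1 j, ← hT2 j (by simpa using hj)]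
          rw [← Finset.sum_add_distrib]
          apply Finset.sum_congr rfl; intro μ0 _
          rw [← Finset.sum_add_distrib]
      _ = ∑ j ∈ Finset.range (m+2), ((m+1).choose j : ℝ) * B j := pascal_sum m B
      _ = _ := rfl

end HPF

theorem higher_product_formula_sum
    (n r : ℕ) (U : Set (Fin n → ℝ)) (hU : IsOpen U)
    (f : (Fin n → ℝ) → ℝ) (hf : ContDiffOn ℝ (⊤ : ℕ∞) f U)
    (g : (k : ℕ) → (Fin k → Fin n) → (Fin n → ℝ) → ℝ)
    (hg : ∀ k, k ≤ r → ∀ μ, ContDiffOn ℝ (⊤ : ℕ∞) (g k μ) U)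
    (hsym : ∀ k, k ≤ r → ∀ (σ : Equiv.Perm (Fin k)) (μ : Fin k → Fin n),
      g k (μ ∘ σ) = g k μ) :
    ∀ x ∈ U,
      ∑ k ∈ Finset.range (r + 1),
        ∑ μ : Fin k → Fin n, pds (List.ofFn μ) (fun y => f y * g k μ y) x
      = ∑ k ∈ Finset.range (r + 1), ∑ l ∈ Finset.range (r - k + 1),
          ((k + l).choose k : ℝ) *
            ∑ μ : Fin (k + l) → Fin n,
              pds ((List.ofFn μ).take k) f x *
                pds ((List.ofFn μ).drop k) (g (k + l) μ) x := by
  intro x hx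
  set T : ℕ → ℕ → ℝ := fun a b => (a.choose b : ℝ) * ∑ μ : Fin a → Fin n,
      pds ((List.ofFn μ).take b) f x * pds ((List.ofFn μ).drop b) (g a μ) x with hT
  calc ∑ k ∈ Finset.range (r + 1),
        ∑ μ : Fin k → Fin n, pds (List.ofFn μ) (fun y => f y * g k μ y) x
      = ∑ k ∈ Finset.range (r+1), ∑ j ∈ Finset.range (k+1), T k j := by
        apply Finset.sum_congr rfl; intro k hk
        have hk' : k ≤ r := by simpa [Nat.lt_succ_iff] using hk
        rw [HPF.key hU hf k (g k) (fun μ => hg k hk' μ) (fun σ μ => hsym k hk' σ μ) x hx]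
    _ = ∑ k ∈ Finset.range (r+1), ∑ l ∈ Finset.range (r-k+1), T (k+l) k := HPF.tri_sum r T
    _ = _ := rfl

end
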